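/- Let n ≥ 1 and let I be a nonzero saturated monomial ideal of ℂ[x_0,…,x_n]. Then the set {a ∈ ℤ_{≥0}^{n+1} : x^a ∉ I} of exponent vectors of monomials not in I is a finite (possibly empty) union of k-orthants with 1 ≤ k ≤ n. -/

import Mathlib

open MvPolynomial

/-- The Hilbert function of an ideal `I ⊆ ℂ[x_0,…,x_{n-1}]`: the dimension over `ℂ` of the
degree-`d` graded piece of the quotient ring. -/
noncomputable def hilbertFn (n : ℕ) (I : Ideal (MvPolynomial (Fin n) ℂ)) (d : ℕ) : ℕ :=
  Module.finrank ℂ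
    ((homogeneousSubmodule (Fin n) ℂ d) ⧸
      (Submodule.comap (homogeneousSubmodule (Fin n) ℂ d).subtype
        (Submodule.restrictScalars ℂ I)))

/-- A monomial ideal: an ideal generated by monomials. -/
def IsMonomialIdeal {n : ℕ} (I : Ideal (MvPolynomial (Fin n) ℂ)) : Prop :=
  ∃ S : Set (Fin n →₀ ℕ), I = Ideal.span ((fun a => monomial a (1 : ℂ)) '' S)

/-- A homogeneous ideal `I` is saturated if for every homogeneous `f`, whenever `x_i * f ∈ I`
for all variables `x_i`, one has `f ∈ I`. -/
def IsSaturatedIdeal {n : ℕ} (I : Ideal (MvPolynomial (Fin n) ℂ)) : Prop :=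
  ∀ f : MvPolynomial (Fin n) ℂ, (∃ d, f.IsHomogeneous d) →
    (∀ i : Fin n, X i * f ∈ I) → f ∈ I

/-- `I` has Hilbert polynomial `p` if its Hilbert function agrees with `p` for all
sufficiently large degrees. -/
def HasHilbertPoly {n : ℕ} (I : Ideal (MvPolynomial (Fin n) ℂ)) (p : Polynomial ℚ) : Prop :=
  ∃ N : ℕ, ∀ d : ℕ, N ≤ d → (hilbertFn n I d : ℚ) = p.eval (d : ℚ)

/-- `I`'s Hilbert function eventually agrees with the function `p`. -/
def HasHilbertFun {n : ℕ} (I : Ideal (MvPolynomial (Fin n) ℂ)) (p : ℕ → ℕ) : Prop :=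
  ∃ N : ℕ, ∀ d : ℕ, N ≤ d → hilbertFn n I d = p d

/-- The value at `d` of the Hilbert polynomial `p_λ` attached to a partition
`λ = (λ_1, …, λ_r)` (given as a list): `p_λ(d) = Σ_{i=1}^r C(d + λ_i − i, λ_i − 1)`.
(For `d ≥ r` the truncated subtraction agrees with the true polynomial value.) -/
def partitionPoly (L : List ℕ) (d : ℕ) : ℕ :=
  ∑ i : Fin L.length, Nat.choose (d + L.get i - (i.val + 1)) (L.get i - 1)

/-- A `k`-orthant in `ℤ_{≥0}^m`: the set of lattice points with `m − k` coordinates fixed. -/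
def IsOrthant (m k : ℕ) (K : Set (Fin m →₀ ℕ)) : Prop :=
  ∃ (S : Finset (Fin m)) (c : Fin m → ℕ), S.card = m - k ∧
    K = {a : Fin m →₀ ℕ | ∀ i ∈ S, a i = c i}

attribute [local instance] MvPolynomial.gradedAlgebra

/-- A homogeneous ideal. -/
def IsHomogeneousIdeal {n : ℕ} (I : Ideal (MvPolynomial (Fin n) ℂ)) : Prop :=
  Ideal.IsHomogeneous (homogeneousSubmodule (Fin n) ℂ) I

theorem aux8 (n : ℕ) (hn : 1 ≤ n) (G : Finset (Fin (n + 1) →₀ ℕ)) (hGne : G.Nonempty)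
    (P : (Fin (n + 1) →₀ ℕ) → Prop)
    (hP : ∀ a, P a ↔ ∀ g ∈ G, ¬ g ≤ a)
    (hsat : ∀ a, P a → ∃ i, P (a + Finsupp.single i 1)) :
    ∃ 𝒞 : Finset (Set (Fin (n + 1) →₀ ℕ)),
      (∀ K ∈ 𝒞, ∃ k : ℕ, 1 ≤ k ∧ k ≤ n ∧ IsOrthant (n + 1) k K) ∧
      {a : Fin (n + 1) →₀ ℕ | P a} = ⋃₀ (𝒞 : Set (Set (Fin (n + 1) →₀ ℕ))) := by
  classical
  -- basic characterization
  have hP' : ∀ a, P a ↔ ∀ g ∈ G, ∃ i, a i < g i := by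
    intro a
    rw [hP]
    refine forall₂_congr fun g hg => ?_
    simp [Finsupp.le_def, not_forall, not_le]
  have hdown : ∀ a b : Fin (n + 1) →₀ ℕ, (∀ j, b j ≤ a j) → P a → P b := by
    intro a b hba ha
    rw [hP'] at ha ⊢
    intro g hg
    obtain ⟨i, hi⟩ := ha g hg
    exact ⟨i, lt_of_le_of_lt (hba i) hi⟩
  -- the bound N
  set N := G.sup (fun g => Finset.univ.sup ⇑g) with hNdef
  have hN : ∀ g ∈ G, ∀ j, g j ≤ N := fun g hg j =>
    le_trans (Finset.le_sup (Finset.mem_univ j)) (Finset.le_sup (f := fun g : Fin (n+1) →₀ ℕ => Finset.univ.sup ⇑g) hg)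
  -- chain lemma
  have hchain : ∀ m : ℕ, ∀ a, P a → ∃ a', (∀ j, a j ≤ a' j) ∧
      (∑ j, a' j) = (∑ j, a j) + m ∧ P a' := by
    intro m
    induction m with
    | zero => exact fun a ha => ⟨a, fun j => le_rfl, by simp, ha⟩
    | succ m ih =>
      intro a ha
      obtain ⟨a', h1, h2, h3⟩ := ih a ha
      obtain ⟨i, hi⟩ := hsat a' h3
      refine ⟨a' + Finsupp.single i 1, fun j => ?_, ?_, hi⟩
      · simp only [Finsupp.add_apply]
        exact le_trans (h1 j) (Nat.le_add_right _ _)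
      · simp only [Finsupp.add_apply]
        rw [Finset.sum_add_distrib, h2]
        have : (∑ j, (Finsupp.single i 1 : Fin (n + 1) →₀ ℕ) j) = 1 := by
          simp [Finsupp.single_apply]
        omega
  -- the ray lemma
  have hray : ∀ a, P a → ∃ i, ∀ b : Fin (n + 1) →₀ ℕ,
      (∀ j, j ≠ i → b j = a j) → P b := by
    intro a ha
    have hN1 : 1 ≤ N := by
      obtain ⟨g₀, hg₀⟩ := hGne
      obtain ⟨i, hi⟩ := (hP' a).mp ha g₀ hg₀
      exact le_trans (by omega) (hN g₀ hg₀ i)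
    obtain ⟨a', h1, h2, h3⟩ := hchain ((n + 1) * N + 1) a ha
    have hex : ∃ i, a i + N ≤ a' i := by
      by_contra hcon
      push_neg at hcon
      have hsum : (∑ j, (a' j + 1)) ≤ ∑ j, (a j + N) := by
        refine Finset.sum_le_sum fun j _ => ?_
        have := hcon j
        omega
      rw [Finset.sum_add_distrib, Finset.sum_add_distrib, Finset.sum_const,
        Finset.sum_const, Finset.card_univ, Fintype.card_fin, smul_eq_mul,
        smul_eq_mul, mul_one] at hsum
      omega
    obtain ⟨i, hi⟩ := hex
    refine ⟨i, fun b hb => ?_⟩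
    rw [hP]
    intro g hg hle
    have : ¬ g ≤ a' := (hP a').mp h3 g hg
    apply this
    rw [Finsupp.le_def]
    intro j
    by_cases hji : j = i
    · subst hji
      exact le_trans (hN g hg j) (by omega)
    · have := Finsupp.le_def.mp hle j
      rw [hb j hji] at this
      exact le_trans this (h1 j)
  -- choice of direction for singleton orthants
  set e : (Fin (n + 1) → Fin (N + 1)) → (Fin (n + 1) →₀ ℕ) :=
    fun c => Finsupp.equivFunOnFinite.symm (fun j => (c j : ℕ)) with hedef
  have he : ∀ c j, e c j = (c j : ℕ) := fun c j => rfl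
  have hray' : ∀ c : Fin (n + 1) → Fin (N + 1), P (e c) → ∃ i,
      ∀ b : Fin (n + 1) →₀ ℕ, (∀ j, j ≠ i → b j = (c j : ℕ)) → P b := by
    intro c hc
    obtain ⟨i, hi⟩ := hray (e c) hc
    exact ⟨i, fun b hb => hi b fun j hj => (hb j hj).trans (he c j).symm⟩
  choose! ic hic using hray'
  -- the two families of orthants
  set F₁ : (({x // x ∈ G} → Fin (n + 1)) × (Fin (n + 1) → Fin (N + 1))) →
      Set (Fin (n + 1) →₀ ℕ) :=
    fun p => {a | ∀ j ∈ Finset.univ.image p.1, a j = (p.2 j : ℕ)} with hF₁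
  set F₂ : (Fin (n + 1) → Fin (N + 1)) → Set (Fin (n + 1) →₀ ℕ) :=
    fun c => {a | ∀ j ∈ Finset.univ.erase (ic c), a j = (c j : ℕ)} with hF₂
  set C₁ := Finset.image F₁ (Finset.univ.filter
    (fun p : ({x // x ∈ G} → Fin (n + 1)) × (Fin (n + 1) → Fin (N + 1)) =>
      Finset.univ.image p.1 ≠ Finset.univ ∧
      ∀ g : {x // x ∈ G}, (p.2 (p.1 g) : ℕ) < (g : Fin (n + 1) →₀ ℕ) (p.1 g))) with hC₁
  set C₂ := Finset.image F₂ (Finset.univ.filter (fun c => P (e c))) with hC₂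
  refine ⟨C₁ ∪ C₂, ?_, ?_⟩
  · intro K hK
    rcases Finset.mem_union.mp hK with hK | hK
    · obtain ⟨p, hp, rfl⟩ := Finset.mem_image.mp hK
      rw [Finset.mem_filter] at hp
      obtain ⟨-, hne, -⟩ := hp
      set T := Finset.univ.image p.1 with hT
      have hTne : T.Nonempty := by
        obtain ⟨g₀, hg₀⟩ := hGne
        exact ⟨p.1 ⟨g₀, hg₀⟩, Finset.mem_image_of_mem _ (Finset.mem_univ _)⟩
      have hTle : T.card ≤ n + 1 := le_trans (Finset.card_le_univ T) (by simp)
      have hTlt : T.card < n + 1 := by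
        rcases lt_or_eq_of_le hTle with h | h
        · exact h
        · exact absurd (Finset.eq_univ_of_card T (by simp [h])) hne
      have hTpos : 1 ≤ T.card := Finset.card_pos.mpr hTne
      refine ⟨n + 1 - T.card, by omega, by omega, T, fun j => (p.2 j : ℕ), by omega, rfl⟩
    · obtain ⟨c, hc, rfl⟩ := Finset.mem_image.mp hK
      refine ⟨1, le_rfl, hn, Finset.univ.erase (ic c), fun j => (c j : ℕ), ?_, rfl⟩
      rw [Finset.card_erase_of_mem (Finset.mem_univ _)]
      simp
  · ext a
    simp only [Set.mem_setOf_eq, Set.mem_sUnion, Finset.coe_union, Set.mem_union,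
      Finset.mem_coe]
    constructor
    · intro ha
      have h1 : ∀ g : {x // x ∈ G}, ∃ i, a i < (g : Fin (n + 1) →₀ ℕ) i :=
        fun g => (hP' a).mp ha g.1 g.2
      choose f hf using h1
      by_cases himg : Finset.univ.image f = Finset.univ
      · -- use C₂
        have haN : ∀ j, a j ≤ N := by
          intro j
          have : j ∈ Finset.univ.image f := himg ▸ Finset.mem_univ j
          obtain ⟨g, -, rfl⟩ := Finset.mem_image.mp this
          exact le_trans (le_of_lt (hf g)) (hN _ g.2 _)
        set c : Fin (n + 1) → Fin (N + 1) := fun j => ⟨a j, by have := haN j; omega⟩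
          with hcdef
        have hea : e c = a := by
          ext j
          rw [he]
        refine ⟨F₂ c, Or.inr (Finset.mem_image_of_mem _ (Finset.mem_filter.mpr
          ⟨Finset.mem_univ _, by rw [hea]; exact ha⟩)), ?_⟩
        intro j _
        rfl
      · -- use C₁
        set c : Fin (n + 1) → Fin (N + 1) :=
          fun j => ⟨min (a j) N, by have := min_le_right (a j) N; omega⟩ with hcdef
        refine ⟨F₁ (f, c), Or.inl (Finset.mem_image_of_mem _ (Finset.mem_filter.mpr
          ⟨Finset.mem_univ _, himg, fun g => lt_of_le_of_lt (min_le_left _ _) (hf g)⟩)), ?_⟩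
        intro j hj
        obtain ⟨g, -, rfl⟩ := Finset.mem_image.mp hj
        have h1 : a (f g) ≤ N := le_trans (le_of_lt (hf g)) (hN _ g.2 _)
        show a (f g) = min (a (f g)) N
        omega
    · rintro ⟨K, hK | hK, haK⟩
      · obtain ⟨p, hp, rfl⟩ := Finset.mem_image.mp hK
        rw [Finset.mem_filter] at hp
        obtain ⟨-, -, hval⟩ := hp
        rw [hP]
        intro g hg hle
        have h1 : a (p.1 ⟨g, hg⟩) = (p.2 (p.1 ⟨g, hg⟩) : ℕ) :=
          haK _ (Finset.mem_image_of_mem _ (Finset.mem_univ _))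
        have h2 : (p.2 (p.1 ⟨g, hg⟩) : ℕ) < g (p.1 ⟨g, hg⟩) := hval ⟨g, hg⟩
        have h3 := Finsupp.le_def.mp hle (p.1 ⟨g, hg⟩)
        omega
      · obtain ⟨c, hc, rfl⟩ := Finset.mem_image.mp hK
        rw [Finset.mem_filter] at hc
        refine hic c hc.2 a fun j hj => haK j (Finset.mem_erase.mpr ⟨hj, Finset.mem_univ _⟩)

theorem red8 (n : ℕ) (I : Ideal (MvPolynomial (Fin (n + 1)) ℂ))
    (hmon : IsMonomialIdeal I) (hsat : IsSaturatedIdeal I) (hne : I ≠ ⊥) :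
    ∃ G : Finset (Fin (n + 1) →₀ ℕ), G.Nonempty ∧
      (∀ a, (monomial a (1 : ℂ) ∉ I) ↔ ∀ g ∈ G, ¬ g ≤ a) ∧
      (∀ a, (monomial a (1 : ℂ) ∉ I) →
        ∃ i, monomial (a + Finsupp.single i 1) (1 : ℂ) ∉ I) := by
  classical
  obtain ⟨S, hS⟩ := hmon
  have Hmem : ∀ a, monomial a (1 : ℂ) ∈ I ↔ ∃ s ∈ S, s ≤ a := by
    intro a
    rw [hS, mem_ideal_span_monomial_image]
    simp [support_monomial]
  set M : Set (Fin (n + 1) →₀ ℕ) := {x | Minimal (· ∈ S) x} with hM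
  have hanti : IsAntichain (· ≤ ·) M := setOf_minimal_antichain _
  have hMfin : M.Finite := hanti.finite_of_partiallyWellOrderedOn
    ((Set.isPWO_of_wellQuasiOrderedLE S).mono (setOf_minimal_subset S))
  have hdom : ∀ s ∈ S, ∃ m ∈ M, m ≤ s := by
    intro s hs
    have hWF : {x | x ∈ S ∧ x ≤ s}.IsWF :=
      ((Set.isPWO_of_wellQuasiOrderedLE S).mono (fun x hx => hx.1)).isWF
    have hne' : {x | x ∈ S ∧ x ≤ s}.Nonempty := ⟨s, hs, le_rfl⟩
    have hm := hWF.min_mem hne'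
    refine ⟨hWF.min hne', ⟨hm.1, fun y hy hle => ?_⟩, hm.2⟩
    have hyin : y ∈ {x | x ∈ S ∧ x ≤ s} := ⟨hy, le_trans hle hm.2⟩
    have hnlt := hWF.not_lt_min hne' hyin
    have : y = hWF.min hne' := by
      by_contra hne''
      exact hnlt (lt_of_le_of_ne hle hne'')
    exact this ▸ le_rfl
  set G := hMfin.toFinset with hG
  have hGmem : ∀ g, g ∈ G ↔ g ∈ M := fun g => Set.Finite.mem_toFinset _
  have HmemG : ∀ a, monomial a (1 : ℂ) ∈ I ↔ ∃ g ∈ G, g ≤ a := by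
    intro a
    rw [Hmem]
    constructor
    · rintro ⟨s, hs, hle⟩
      obtain ⟨m, hmM, hms⟩ := hdom s hs
      exact ⟨m, (hGmem m).mpr hmM, le_trans hms hle⟩
    · rintro ⟨g, hg, hle⟩
      exact ⟨g, ((hGmem g).mp hg).1, hle⟩
  have hGne : G.Nonempty := by
    rcases G.eq_empty_or_nonempty with h | h
    · exfalso
      apply hne
      rw [hS]
      have hSe : S = ∅ := by
        by_contra hSne
        obtain ⟨s, hs⟩ := Set.nonempty_iff_ne_empty.mpr hSne
        obtain ⟨m, hmM, -⟩ := hdom s hs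
        rw [← hGmem m, h] at hmM
        exact absurd hmM (Finset.notMem_empty m)
      rw [hSe, Set.image_empty, Ideal.span_empty]
    · exact h
  refine ⟨G, hGne, fun a => ?_, fun a ha => ?_⟩
  · rw [HmemG]
    push_neg
    rfl
  · by_contra h
    push_neg at h
    apply ha
    apply hsat (monomial a 1) ⟨a.degree, isHomogeneous_monomial 1 rfl⟩
    intro i
    have hx : X i * monomial a (1 : ℂ) = monomial (a + Finsupp.single i 1) 1 := by
      rw [show (X i : MvPolynomial (Fin (n + 1)) ℂ) = monomial (Finsupp.single i 1) 1 from
        rfl, monomial_mul, one_mul]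
      exact congrArg (fun d => (monomial d (1 : ℂ) : MvPolynomial (Fin (n + 1)) ℂ))
        (add_comm _ _)
    rw [hx]
    exact h i

/-- For `n ≥ 1` and a nonzero saturated monomial ideal `I ⊆ ℂ[x_0,…,x_n]`,
the set of exponent vectors of monomials not in `I` is a finite union of `k`-orthants with
`1 ≤ k ≤ n`. -/
theorem statement8 (n : ℕ) (hn : 1 ≤ n) (I : Ideal (MvPolynomial (Fin (n + 1)) ℂ))
    (hmon : IsMonomialIdeal I) (hsat : IsSaturatedIdeal I) (hne : I ≠ ⊥) :
    ∃ 𝒞 : Finset (Set (Fin (n + 1) →₀ ℕ)),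
      (∀ K ∈ 𝒞, ∃ k : ℕ, 1 ≤ k ∧ k ≤ n ∧ IsOrthant (n + 1) k K) ∧
      {a : Fin (n + 1) →₀ ℕ | monomial a (1 : ℂ) ∉ I}
        = ⋃₀ (𝒞 : Set (Set (Fin (n + 1) →₀ ℕ))) := by
  obtain ⟨G, hGne, hP, hsat'⟩ := red8 n I hmon hsat hne
  exact aux8 n hn G hGne (fun a => monomial a (1 : ℂ) ∉ I) hP hsat'
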